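/- Let \((\theta^{(t)})_{t \ge 0}\) be an inhomogeneous Markov chain with kernels \(\hat P_t\) each satisfying the Doeblin condition with constant \(\alpha^* \in (0,1)\). For bounded measurable functions \(f, g\), \(|\mathrm{Cov}(f(\theta^{(j)}), g(\theta^{(k)}))| \le 8 \|f\|_\infty \|g\|_\infty (1-\alpha^*)^{|k-j|}\). -/

import Mathlib

open MeasureTheory

noncomputable def tvDist {Θ : Type*} [MeasurableSpace Θ] (μ ν : Measure Θ) : ℝ :=
  sSup {r : ℝ | ∃ A : Set Θ, MeasurableSet A ∧ r = |(μ A).toReal - (ν A).toReal|}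

section Aux

variable {Θ : Type*} [MeasurableSpace Θ]

lemma toReal_le_one {μ : Measure Θ} [IsProbabilityMeasure μ] (A : Set Θ) :
    (μ A).toReal ≤ 1 := by
  have h := prob_le_one (μ := μ) (s := A)
  simpa using ENNReal.toReal_mono ENNReal.one_ne_top h

lemma le_tvDist {μ ν : Measure Θ} [IsProbabilityMeasure μ] [IsProbabilityMeasure ν]
    {A : Set Θ} (hA : MeasurableSet A) :
    |(μ A).toReal - (ν A).toReal| ≤ tvDist μ ν := by
  apply le_csSup
  · refine ⟨1, ?_⟩
    rintro r ⟨B, hB, rfl⟩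
    have h1 := toReal_le_one (μ := μ) B
    have h2 := toReal_le_one (μ := ν) B
    have h3 : 0 ≤ (μ B).toReal := ENNReal.toReal_nonneg
    have h4 : 0 ≤ (ν B).toReal := ENNReal.toReal_nonneg
    exact abs_le.2 ⟨by linarith, by linarith⟩
  · exact ⟨A, hA, rfl⟩

lemma tvDist_nonneg {μ ν : Measure Θ} [IsProbabilityMeasure μ] [IsProbabilityMeasure ν] :
    0 ≤ tvDist μ ν := by
  have := le_tvDist (μ := μ) (ν := ν) MeasurableSet.empty
  simpa using this

lemma integrable_of_bound {ρ : Measure Θ} [IsFiniteMeasure ρ] {h : Θ → ℝ}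
    (hh : Measurable h) {C : ℝ} (hC : ∀ x, |h x| ≤ C) : Integrable h ρ :=
  (integrable_const C).mono' hh.aestronglyMeasurable
    (Filter.Eventually.of_forall fun x => by simpa [Real.norm_eq_abs] using hC x)

lemma abs_integral_sub_le_of_le {μ' ν' : Measure Θ} [IsFiniteMeasure μ'] [IsFiniteMeasure ν']
    (hle : ν' ≤ μ') {h : Θ → ℝ} (hm : Measurable h) {C : ℝ} (hC0 : 0 ≤ C)
    (hC : ∀ x, |h x| ≤ C) :
    |∫ x, h x ∂μ' - ∫ x, h x ∂ν'| ≤ C * ((μ' Set.univ).toReal - (ν' Set.univ).toReal) := by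
  have hiμ : Integrable h μ' := integrable_of_bound hm hC
  have hiν : Integrable h ν' := integrable_of_bound hm hC
  have key : ∀ (h' : Θ → ℝ), Measurable h' → (∀ x, 0 ≤ h' x) → (∀ x, |h' x| ≤ 2 * C) →
      ∫ x, h' x ∂ν' ≤ ∫ x, h' x ∂μ' := by
    intro h' hm' h0 hb
    exact integral_mono_measure hle (Filter.Eventually.of_forall h0)
      (integrable_of_bound hm' hb)
  have h1 : ∫ x, (C + h x) ∂ν' ≤ ∫ x, (C + h x) ∂μ' := by
    refine key _ (measurable_const.add hm) (fun x => ?_) (fun x => ?_)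
    · linarith [abs_le.1 (hC x)]
    · have := abs_le.1 (hC x); exact abs_le.2 ⟨by linarith, by linarith⟩
  have h2 : ∫ x, (C - h x) ∂ν' ≤ ∫ x, (C - h x) ∂μ' := by
    refine key _ (measurable_const.sub hm) (fun x => ?_) (fun x => ?_)
    · linarith [abs_le.1 (hC x)]
    · have := abs_le.1 (hC x); exact abs_le.2 ⟨by linarith, by linarith⟩
  rw [integral_add (integrable_const C) hiν, integral_add (integrable_const C) hiμ,
    integral_const, integral_const] at h1
  rw [integral_sub (integrable_const C) hiν, integral_sub (integrable_const C) hiμ,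
    integral_const, integral_const] at h2
  simp only [smul_eq_mul, mul_one, measureReal_def] at h1 h2
  exact abs_le.2 ⟨by linarith, by linarith⟩

lemma abs_integral_sub_le_tvDist {μ ν : Measure Θ} [IsProbabilityMeasure μ]
    [IsProbabilityMeasure ν] {h : Θ → ℝ} (hm : Measurable h) {C : ℝ} (hC0 : 0 ≤ C)
    (hC : ∀ x, |h x| ≤ C) :
    |∫ x, h x ∂μ - ∫ x, h x ∂ν| ≤ 2 * C * tvDist μ ν := by
  obtain ⟨S, hS, hS1, hS2⟩ := hahn_decomposition (μ := μ) (ν := ν)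
  have hle1 : ν.restrict S ≤ μ.restrict S := by
    refine Measure.le_iff.2 fun t ht => ?_
    rw [Measure.restrict_apply ht, Measure.restrict_apply ht]
    exact hS1 _ (ht.inter hS) Set.inter_subset_right
  have hle2 : μ.restrict Sᶜ ≤ ν.restrict Sᶜ := by
    refine Measure.le_iff.2 fun t ht => ?_
    rw [Measure.restrict_apply ht, Measure.restrict_apply ht]
    exact hS2 _ (ht.inter hS.compl) Set.inter_subset_right
  have e1 := abs_integral_sub_le_of_le hle1 hm hC0 hC
  have e2 := abs_integral_sub_le_of_le hle2 hm hC0 hC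
  rw [Measure.restrict_apply_univ, Measure.restrict_apply_univ] at e1 e2
  have hiμ : Integrable h μ := integrable_of_bound hm hC
  have hiν : Integrable h ν := integrable_of_bound hm hC
  have s1 : ∫ x in S, h x ∂μ + ∫ x in Sᶜ, h x ∂μ = ∫ x, h x ∂μ := integral_add_compl hS hiμ
  have s2 : ∫ x in S, h x ∂ν + ∫ x in Sᶜ, h x ∂ν = ∫ x, h x ∂ν := integral_add_compl hS hiν
  have t1 : (μ S).toReal - (ν S).toReal ≤ tvDist μ ν :=
    le_trans (le_abs_self _) (le_tvDist hS)
  have t2 : (ν Sᶜ).toReal - (μ Sᶜ).toReal ≤ tvDist μ ν := by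
    have ht := le_tvDist (μ := μ) (ν := ν) hS.compl
    have hn := neg_abs_le ((μ Sᶜ).toReal - (ν Sᶜ).toReal)
    linarith
  have e1' := abs_le.1 e1
  have e2' := abs_le.1 e2
  refine abs_le.2 ⟨?_, ?_⟩ <;> nlinarith [hC0, t1, t2]

end Aux

/-- `stepK Ps j m` is the `m`-step transition law from time `j` of the
inhomogeneous chain with kernels `Ps`, i.e. the composition `P̂_{j+1} ⋯ P̂_{j+m}`. -/
noncomputable def stepK {Θ : Type*} [MeasurableSpace Θ]
    (Ps : ℕ → Θ → Measure Θ) (j : ℕ) : ℕ → Θ → Measure Θ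
  | 0 => fun x => Measure.dirac x
  | m + 1 => fun x => (stepK Ps j m x).bind (Ps (j + m + 1))

section StepK

variable {Θ : Type*} [MeasurableSpace Θ]

lemma stepK_succ (Ps : ℕ → Θ → Measure Θ) (j m : ℕ) :
    stepK Ps j (m + 1) = fun x => (stepK Ps j m x).bind (Ps (j + m + 1)) := rfl

lemma stepK_measurable (Ps : ℕ → Θ → Measure Θ) (hPs : ∀ t, Measurable (Ps t)) (j : ℕ) :
    ∀ m, Measurable (stepK Ps j m) := by
  intro m
  induction m with
  | zero => exact Measure.measurable_dirac
  | succ m ih =>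
    rw [stepK_succ]
    exact (Measure.measurable_bind' (hPs _)).comp ih

lemma stepK_prob (Ps : ℕ → Θ → Measure Θ) (hPs : ∀ t, Measurable (Ps t))
    (hP : ∀ t θ, IsProbabilityMeasure (Ps t θ)) (j : ℕ) :
    ∀ m x, IsProbabilityMeasure (stepK Ps j m x) := by
  intro m
  induction m with
  | zero => intro x; exact Measure.dirac.isProbabilityMeasure
  | succ m ih =>
    intro x
    haveI := ih x
    constructor
    rw [stepK_succ, Measure.bind_apply MeasurableSet.univ (hPs _).aemeasurable]
    have : ∀ a, Ps (j + m + 1) a Set.univ = 1 := fun a => (hP _ a).measure_univ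
    simp [this]

lemma integral_bind_eq {μ : Measure Θ} [IsProbabilityMeasure μ] {P : Θ → Measure Θ}
    (hP : Measurable P) (hPp : ∀ x, IsProbabilityMeasure (P x)) {h : Θ → ℝ}
    (hh : Measurable h) {C : ℝ} (hC : ∀ x, |h x| ≤ C) :
    ∫ z, h z ∂(μ.bind P) = ∫ x, ∫ z, h z ∂(P x) ∂μ := by
  let κ : ProbabilityTheory.Kernel Θ Θ := ⟨P, hP⟩
  haveI : ProbabilityTheory.IsMarkovKernel κ := ⟨hPp⟩
  have hbind : μ.bind P = (μ.compProd κ).map Prod.snd := by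
    ext s hs
    rw [Measure.map_apply measurable_snd hs,
      Measure.compProd_apply (measurable_snd hs),
      Measure.bind_apply hs hP.aemeasurable]
    rfl
  rw [hbind, integral_map measurable_snd.aemeasurable hh.aestronglyMeasurable,
    Measure.integral_compProd]
  · rfl
  · exact (integrable_const C).mono' (hh.comp measurable_snd).aestronglyMeasurable
      (Filter.Eventually.of_forall fun p => by simpa [Real.norm_eq_abs] using hC p.2)

lemma abs_integral_le_of_bound {ρ : Measure Θ} [IsProbabilityMeasure ρ] {h : Θ → ℝ} {C : ℝ}
    (hC : ∀ x, |h x| ≤ C) : |∫ x, h x ∂ρ| ≤ C := by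
  have := norm_integral_le_of_norm_le_const (μ := ρ) (f := h) (C := C)
    (Filter.Eventually.of_forall fun z => by simpa [Real.norm_eq_abs] using hC z)
  simpa [Real.norm_eq_abs, measure_univ] using this

lemma osc_integral_kernel [Nonempty Θ] {P : Θ → Measure Θ} (hP : Measurable P)
    (hPp : ∀ x, IsProbabilityMeasure (P x)) {αs : ℝ}
    (hD : ∀ x y, tvDist (P x) (P y) ≤ 1 - αs) (hα : 0 ≤ 1 - αs)
    {h : Θ → ℝ} (hh : Measurable h) {C D : ℝ} (hC : ∀ x, |h x| ≤ C)
    (hosc : ∀ x y, |h x - h y| ≤ D) (x y : Θ) :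
    |∫ z, h z ∂(P x) - ∫ z, h z ∂(P y)| ≤ (1 - αs) * D := by
  have hD0 : 0 ≤ D := le_trans (abs_nonneg _) (hosc x x)
  obtain ⟨x₀⟩ := (inferInstance : Nonempty Θ)
  set M := sSup (Set.range h) with hM
  set m0 := sInf (Set.range h) with hm0
  have hbdd : BddAbove (Set.range h) := ⟨C, by rintro _ ⟨z, rfl⟩; exact (abs_le.1 (hC z)).2⟩
  have hbddb : BddBelow (Set.range h) := ⟨-C, by rintro _ ⟨z, rfl⟩; exact (abs_le.1 (hC z)).1⟩
  have hne : (Set.range h).Nonempty := ⟨h x₀, ⟨x₀, rfl⟩⟩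
  have hle1 : ∀ z, h z ≤ M := fun z => le_csSup hbdd ⟨z, rfl⟩
  have hle2 : ∀ z, m0 ≤ h z := fun z => csInf_le hbddb ⟨z, rfl⟩
  have hMm : M - m0 ≤ D := by
    have h1 : M ≤ m0 + D := by
      refine csSup_le hne ?_
      rintro _ ⟨z, rfl⟩
      have h2 : h z - D ≤ m0 := by
        refine le_csInf hne ?_
        rintro _ ⟨w, rfl⟩
        linarith [abs_le.1 (hosc z w)]
      linarith
    linarith
  set c := (M + m0) / 2 with hc
  have hcb : ∀ z, |h z - c| ≤ D / 2 := fun z =>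
    abs_le.2 ⟨by have := hle2 z; simp only [hc]; linarith,
      by have := hle1 z; simp only [hc]; linarith⟩
  haveI := hPp x; haveI := hPp y
  have key := abs_integral_sub_le_tvDist (μ := P x) (ν := P y) (h := fun z => h z - c)
    (hh.sub measurable_const) (by linarith : (0:ℝ) ≤ D / 2) hcb
  have hint : ∀ w, Integrable h (P w) := fun w => by
    haveI := hPp w; exact integrable_of_bound hh hC
  have hi : ∀ w, ∫ z, (h z - c) ∂(P w) = (∫ z, h z ∂(P w)) - c := fun w => by
    haveI := hPp w
    rw [integral_sub (hint w) (integrable_const c), integral_const]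
    simp
  rw [hi x, hi y, sub_sub_sub_cancel_right] at key
  have htv := hD x y
  have htv0 : 0 ≤ tvDist (P x) (P y) := tvDist_nonneg
  nlinarith [key, mul_le_mul_of_nonneg_left htv hD0]

end StepK

section Contract

variable {Θ : Type*} [MeasurableSpace Θ]

lemma stepK_contract [Nonempty Θ] (Phat : ℕ → Θ → Measure Θ)
    (hPm : ∀ t, Measurable (Phat t)) (hPp : ∀ t θ, IsProbabilityMeasure (Phat t θ))
    {αs : ℝ} (hα : 0 ≤ 1 - αs)
    (hD : ∀ t x y, tvDist (Phat t x) (Phat t y) ≤ 1 - αs) (j : ℕ) :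
    ∀ m (h : Θ → ℝ) (C D : ℝ), Measurable h → (∀ x, |h x| ≤ C) →
      (∀ x y, |h x - h y| ≤ D) → ∀ x y,
      |∫ z, h z ∂(stepK Phat j m x) - ∫ z, h z ∂(stepK Phat j m y)| ≤ (1 - αs) ^ m * D := by
  intro m
  induction m with
  | zero =>
    intro h C D hh hC hosc x y
    show |∫ z, h z ∂(Measure.dirac x) - ∫ z, h z ∂(Measure.dirac y)| ≤ (1 - αs) ^ 0 * D
    rw [integral_dirac' _ _ hh.stronglyMeasurable, integral_dirac' _ _ hh.stronglyMeasurable]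
    simpa using hosc x y
  | succ m ih =>
    intro h C D hh hC hosc x y
    set Ph : Θ → ℝ := fun w => ∫ z, h z ∂(Phat (j + m + 1) w) with hPhdef
    have hPhm : Measurable Ph := by
      let κ : ProbabilityTheory.Kernel Θ Θ := ⟨Phat (j + m + 1), hPm _⟩
      haveI : ProbabilityTheory.IsMarkovKernel κ := ⟨hPp _⟩
      exact (MeasureTheory.StronglyMeasurable.integral_kernel_prod_right' (κ := κ)
        ((hh.comp measurable_snd).stronglyMeasurable)).measurable
    have hPhC : ∀ w, |Ph w| ≤ C := fun w => by
      haveI := hPp (j + m + 1) w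
      exact abs_integral_le_of_bound hC
    have hPhosc : ∀ w w', |Ph w - Ph w'| ≤ (1 - αs) * D :=
      osc_integral_kernel (hPm _) (hPp _) (hD _) hα hh hC hosc
    have hrw : ∀ w, ∫ z, h z ∂(stepK Phat j (m + 1) w) = ∫ x', Ph x' ∂(stepK Phat j m w) := by
      intro w
      haveI := stepK_prob Phat hPm hPp j m w
      exact integral_bind_eq (hPm _) (hPp _) hh hC
    rw [hrw x, hrw y]
    calc |∫ x', Ph x' ∂(stepK Phat j m x) - ∫ x', Ph x' ∂(stepK Phat j m y)|
        ≤ (1 - αs) ^ m * ((1 - αs) * D) := ih Ph C ((1 - αs) * D) hPhm hPhC hPhosc x y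
      _ = (1 - αs) ^ (m + 1) * D := by ring

end Contract

lemma key_cov {Θ Ω : Type*} [MeasurableSpace Θ] [MeasurableSpace Ω]
    (μ : Measure Ω) [IsProbabilityMeasure μ]
    (X : ℕ → Ω → Θ) (hXmeas : ∀ t, Measurable (X t))
    (Phat : ℕ → Θ → Measure Θ) (hPhatmeas : ∀ t, Measurable (Phat t))
    (hPhat : ∀ t θ, IsProbabilityMeasure (Phat t θ))
    (αs : ℝ) (hα : 0 ≤ 1 - αs)
    (hDoeblin : ∀ t θ ζ, tvDist (Phat t θ) (Phat t ζ) ≤ 1 - αs)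
    (hjoint : ∀ j k : ℕ, j ≤ k → ∀ A B : Set Θ, MeasurableSet A → MeasurableSet B →
      μ {ω | X j ω ∈ A ∧ X k ω ∈ B}
        = ∫⁻ x in A, stepK Phat j (k - j) x B ∂(Measure.map (X j) μ))
    (f g : Θ → ℝ) (hf : Measurable f) (hg : Measurable g)
    (Cf Cg : ℝ) (hCf : ∀ θ, |f θ| ≤ Cf) (hCg : ∀ θ, |g θ| ≤ Cg)
    (j k : ℕ) (hjk : j ≤ k) :
    |(∫ ω, f (X j ω) * g (X k ω) ∂μ)
        - (∫ ω, f (X j ω) ∂μ) * (∫ ω, g (X k ω) ∂μ)|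
      ≤ 8 * Cf * Cg * (1 - αs) ^ (k - j) := by
  have hΩ : Nonempty Ω := by
    by_contra hne
    rw [not_nonempty_iff] at hne
    have h1 : (μ Set.univ) = 1 := measure_univ
    rw [Set.univ_eq_empty_iff.mpr hne, measure_empty] at h1
    exact zero_ne_one h1
  haveI hΘ : Nonempty Θ := hΩ.map (X 0)
  have hCf0 : 0 ≤ Cf := le_trans (abs_nonneg _) (hCf (Classical.arbitrary Θ))
  have hCg0 : 0 ≤ Cg := le_trans (abs_nonneg _) (hCg (Classical.arbitrary Θ))
  set m := k - j with hm
  set η := Measure.map (X j) μ with hη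
  haveI : IsProbabilityMeasure η := Measure.isProbabilityMeasure_map (hXmeas j).aemeasurable
  let κ : ProbabilityTheory.Kernel Θ Θ := ⟨stepK Phat j m, stepK_measurable Phat hPhatmeas j m⟩
  haveI : ProbabilityTheory.IsMarkovKernel κ := ⟨fun x => stepK_prob Phat hPhatmeas hPhat j m x⟩
  have hpair : Measurable (fun ω => (X j ω, X k ω)) := (hXmeas j).prodMk (hXmeas k)
  set ρ₁ := Measure.map (fun ω => (X j ω, X k ω)) μ with hρ₁
  haveI : IsProbabilityMeasure ρ₁ := Measure.isProbabilityMeasure_map hpair.aemeasurable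
  have hρ : ρ₁ = η.compProd κ := by
    refine ext_of_generate_finite _ generateFrom_prod.symm isPiSystem_prod ?_ ?_
    · rintro s ⟨A, hA, B, hB, rfl⟩
      rw [Measure.map_apply hpair (hA.prod hB),
        Measure.compProd_apply_prod hA hB]
      have hpre : (fun ω => (X j ω, X k ω)) ⁻¹' (A ×ˢ B) = {ω | X j ω ∈ A ∧ X k ω ∈ B} := by
        ext ω; simp [Set.mem_prod]
      rw [hpre, hjoint j k hjk A B hA hB]
      rfl
    · simp [measure_univ]
  set G : Θ → ℝ := fun x => ∫ y, g y ∂(stepK Phat j m x) with hGdef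
  have hGm : Measurable G :=
    (MeasureTheory.StronglyMeasurable.integral_kernel_prod_right' (κ := κ)
      ((hg.comp measurable_snd).stronglyMeasurable)).measurable
  have hGb : ∀ x, |G x| ≤ Cg := fun x => by
    haveI := stepK_prob Phat hPhatmeas hPhat j m x
    exact abs_integral_le_of_bound hCg
  have hgosc : ∀ x y, |g x - g y| ≤ 2 * Cg := fun x y => by
    have h1 := abs_le.1 (hCg x); have h2 := abs_le.1 (hCg y)
    exact abs_le.2 ⟨by linarith, by linarith⟩
  have hGosc : ∀ x y, |G x - G y| ≤ (1 - αs) ^ m * (2 * Cg) := fun x y =>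
    stepK_contract Phat hPhatmeas hPhat hα hDoeblin j m g Cg (2 * Cg) hg hCg hgosc x y
  -- rewriting the three integrals
  have hFG : Measurable (fun p : Θ × Θ => f p.1 * g p.2) :=
    (hf.comp measurable_fst).mul (hg.comp measurable_snd)
  have hFGb : ∀ p : Θ × Θ, |f p.1 * g p.2| ≤ Cf * Cg := fun p => by
    rw [abs_mul]
    exact mul_le_mul (hCf _) (hCg _) (abs_nonneg _) hCf0
  have hFGint : Integrable (fun p : Θ × Θ => f p.1 * g p.2) (η.compProd κ) :=
    (integrable_const (Cf * Cg)).mono' hFG.aestronglyMeasurable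
      (Filter.Eventually.of_forall fun p => by simpa only [Real.norm_eq_abs] using hFGb p)
  have E1 : ∫ ω, f (X j ω) * g (X k ω) ∂μ = ∫ x, f x * G x ∂η := by
    have h1 : ∫ p : Θ × Θ, f p.1 * g p.2 ∂ρ₁ = ∫ ω, f (X j ω) * g (X k ω) ∂μ :=
      integral_map hpair.aemeasurable hFG.aestronglyMeasurable
    rw [← h1, hρ, Measure.integral_compProd hFGint]
    refine integral_congr_ae (Filter.Eventually.of_forall fun a => ?_)
    show ∫ b, f a * g b ∂(κ a) = f a * G a
    rw [integral_const_mul]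
    rfl
  have hgsnd : Measurable (fun p : Θ × Θ => g p.2) := hg.comp measurable_snd
  have E2 : ∫ ω, g (X k ω) ∂μ = ∫ x, G x ∂η := by
    have h1 : ∫ p : Θ × Θ, g p.2 ∂ρ₁ = ∫ ω, g (X k ω) ∂μ :=
      integral_map hpair.aemeasurable hgsnd.aestronglyMeasurable
    rw [← h1, hρ, Measure.integral_compProd ((integrable_const Cg).mono'
      hgsnd.aestronglyMeasurable
      (Filter.Eventually.of_forall fun p => by simpa [Real.norm_eq_abs] using hCg p.2))]
    rfl
  have E3 : ∫ ω, f (X j ω) ∂μ = ∫ x, f x ∂η :=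
    (integral_map (hXmeas j).aemeasurable hf.aestronglyMeasurable).symm
  -- final bound
  set c := G (Classical.arbitrary Θ) with hcdef
  set D' := (1 - αs) ^ m * (2 * Cg) with hD'def
  have hD'0 : 0 ≤ D' := le_trans (abs_nonneg _) (hGosc (Classical.arbitrary Θ) (Classical.arbitrary Θ))
  have hGc : ∀ x, |G x - c| ≤ D' := fun x => hGosc x (Classical.arbitrary Θ)
  have hfint : Integrable f η := integrable_of_bound hf hCf
  have hGint : Integrable G η := integrable_of_bound hGm hGb
  have hfGint : Integrable (fun x => f x * G x) η :=
    integrable_of_bound (hf.mul hGm) (C := Cf * Cg) (fun x => by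
      rw [abs_mul]; exact mul_le_mul (hCf _) (hGb _) (abs_nonneg _) hCf0)
  have hfcint : Integrable (fun x => f x * c) η := hfint.mul_const c
  have decomp : ∫ x, f x * G x ∂η - (∫ x, f x ∂η) * (∫ x, G x ∂η)
      = ∫ x, f x * (G x - c) ∂η - (∫ x, f x ∂η) * (∫ x, (G x - c) ∂η) := by
    have d1 : ∫ x, (G x - c) ∂η = (∫ x, G x ∂η) - c := by
      rw [integral_sub hGint (integrable_const c), integral_const]; simp
    have d2 : ∫ x, f x * (G x - c) ∂η = ∫ x, f x * G x ∂η - c * ∫ x, f x ∂η := by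
      simp_rw [mul_sub]
      rw [integral_sub hfGint hfcint, integral_mul_const]
      ring
    rw [d1, d2]; ring
  have b1 : |∫ x, f x * (G x - c) ∂η| ≤ Cf * D' :=
    abs_integral_le_of_bound (fun x => by
      rw [abs_mul]; exact mul_le_mul (hCf _) (hGc _) (abs_nonneg _) hCf0)
  have b2 : |∫ x, f x ∂η| ≤ Cf := abs_integral_le_of_bound hCf
  have b3 : |∫ x, (G x - c) ∂η| ≤ D' := abs_integral_le_of_bound hGc
  have bfinal : |∫ x, f x * (G x - c) ∂η - (∫ x, f x ∂η) * (∫ x, (G x - c) ∂η)|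
      ≤ Cf * D' + Cf * D' := by
    refine (abs_sub _ _).trans (add_le_add b1 ?_)
    rw [abs_mul]
    exact mul_le_mul b2 b3 (abs_nonneg _) hCf0
  rw [E1, E2, E3, decomp]
  have hpow : 0 ≤ (1 - αs) ^ m := pow_nonneg hα m
  calc |∫ x, f x * (G x - c) ∂η - (∫ x, f x ∂η) * (∫ x, (G x - c) ∂η)|
      ≤ Cf * D' + Cf * D' := bfinal
    _ = 4 * Cf * Cg * (1 - αs) ^ m := by rw [hD'def]; ring
    _ ≤ 8 * Cf * Cg * (1 - αs) ^ m := by nlinarith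

theorem stmt7 {Θ Ω : Type*} [MeasurableSpace Θ] [MeasurableSpace Ω]
    (μ : Measure Ω) [IsProbabilityMeasure μ]
    (X : ℕ → Ω → Θ) (hXmeas : ∀ t, Measurable (X t))
    (Phat : ℕ → Θ → Measure Θ) (hPhatmeas : ∀ t, Measurable (Phat t))
    (hPhat : ∀ t θ, IsProbabilityMeasure (Phat t θ))
    (αs : ℝ) (hαs0 : 0 < αs) (hαs1 : αs < 1)
    (hDoeblin : ∀ t θ ζ, tvDist (Phat t θ) (Phat t ζ) ≤ 1 - αs)
    -- Markov property: the joint law of `(X j, X k)` for `j ≤ k` is the law of `X j`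
    -- coupled through the composed kernel `P̂_{j+1} ⋯ P̂_k`.
    (hjoint : ∀ j k : ℕ, j ≤ k → ∀ A B : Set Θ, MeasurableSet A → MeasurableSet B →
      μ {ω | X j ω ∈ A ∧ X k ω ∈ B}
        = ∫⁻ x in A, stepK Phat j (k - j) x B ∂(Measure.map (X j) μ))
    (f g : Θ → ℝ) (hf : Measurable f) (hg : Measurable g)
    (Cf Cg : ℝ) (hCf : ∀ θ, |f θ| ≤ Cf) (hCg : ∀ θ, |g θ| ≤ Cg) :
    ∀ j k : ℕ,
      |(∫ ω, f (X j ω) * g (X k ω) ∂μ)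
          - (∫ ω, f (X j ω) ∂μ) * (∫ ω, g (X k ω) ∂μ)|
        ≤ 8 * Cf * Cg * (1 - αs) ^ (Nat.dist j k) := by
  intro j k
  have hα : 0 ≤ 1 - αs := by linarith
  rcases le_total j k with h | h
  · rw [Nat.dist_eq_sub_of_le h]
    exact key_cov μ X hXmeas Phat hPhatmeas hPhat αs hα hDoeblin hjoint f g hf hg
      Cf Cg hCf hCg j k h
  · rw [Nat.dist_eq_sub_of_le_right h]
    have hkey := key_cov μ X hXmeas Phat hPhatmeas hPhat αs hα hDoeblin hjoint g f hg hf
      Cg Cf hCg hCf k j h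
    have heq : (∫ ω, f (X j ω) * g (X k ω) ∂μ) = ∫ ω, g (X k ω) * f (X j ω) ∂μ :=
      integral_congr_ae (Filter.Eventually.of_forall fun ω => mul_comm _ _)
    rw [heq, mul_comm (∫ ω, f (X j ω) ∂μ)]
    calc |(∫ ω, g (X k ω) * f (X j ω) ∂μ)
          - (∫ ω, g (X k ω) ∂μ) * (∫ ω, f (X j ω) ∂μ)|
        ≤ 8 * Cg * Cf * (1 - αs) ^ (j - k) := hkey
      _ = 8 * Cf * Cg * (1 - αs) ^ (j - k) := by ring
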